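/- Let X and Y be real Banach spaces and let H : X → Y be a continuously Fréchet differentiable map. Suppose there are a point x₀ ∈ X and positive constants δ and C such that: (i) for every x in the closed ball B̄_δ(x₀) = {x ∈ X : ‖x − x₀‖ ≤ δ}, the Fréchet derivative DH(x) is a continuous linear isomorphism from X onto Y with ‖(DH(x))⁻¹‖ ≤ C; and (ii) for all x₁, x₂ ∈ B̄_δ(x₀), ‖DH(x₁) − DH(x₂)‖ ≤ 1/(2C) in the operator norm. If ‖H(x₀)‖ ≤ δ/(2C), then there exists x ∈ B̄_δ(x₀) with H(x) = 0. -/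

import Mathlib

/-- **Lemma 3.5 (implicit function theorem).**
Let `X` and `Y` be real Banach spaces and `H : X → Y` a `C¹` map.  Suppose there are
`x₀ ∈ X` and positive constants `δ`, `C` such that for every `x` in the closed ball
`B̄_δ(x₀)` the Fréchet derivative `DH(x)` is a continuous linear isomorphism of `X`
onto `Y` whose inverse has operator norm at most `C`, and such that
`‖DH(x₁) − DH(x₂)‖ ≤ 1/(2C)` for all `x₁, x₂ ∈ B̄_δ(x₀)`.  If `‖H(x₀)‖ ≤ δ/(2C)`,
then there is `x ∈ B̄_δ(x₀)` with `H(x) = 0`. -/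
theorem implicit_function_zero
    {X Y : Type*} [NormedAddCommGroup X] [NormedSpace ℝ X] [CompleteSpace X]
    [NormedAddCommGroup Y] [NormedSpace ℝ Y] [CompleteSpace Y]
    (H : X → Y) (hH : ContDiff ℝ 1 H)
    (x₀ : X) (δ C : ℝ) (hδ : 0 < δ) (hC : 0 < C)
    (hiso : ∀ x ∈ Metric.closedBall x₀ δ, ∃ e : X ≃L[ℝ] Y,
      (e : X →L[ℝ] Y) = fderiv ℝ H x ∧ ‖(e.symm : Y →L[ℝ] X)‖ ≤ C)
    (hlip : ∀ x₁ ∈ Metric.closedBall x₀ δ, ∀ x₂ ∈ Metric.closedBall x₀ δ,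
      ‖fderiv ℝ H x₁ - fderiv ℝ H x₂‖ ≤ 1 / (2 * C))
    (h0 : ‖H x₀‖ ≤ δ / (2 * C)) :
    ∃ x ∈ Metric.closedBall x₀ δ, H x = 0 := by
  have hx₀ : x₀ ∈ Metric.closedBall x₀ δ := Metric.mem_closedBall_self hδ.le
  obtain ⟨e₀, he₀, hCe₀⟩ := hiso x₀ hx₀
  set s := Metric.closedBall x₀ δ with hs
  have hsconv : Convex ℝ s := convex_closedBall x₀ δ
  have hdiff : Differentiable ℝ H := hH.differentiable one_ne_zero
  set L₀ : X →L[ℝ] Y := fderiv ℝ H x₀ with hL₀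
  -- the Newton map
  set g : X → X := fun x => x - e₀.symm (H x) with hg
  -- mean value estimate for φ x = H x - L₀ x
  have hmvt : ∀ x₁ ∈ s, ∀ x₂ ∈ s,
      ‖(H x₁ - L₀ x₁) - (H x₂ - L₀ x₂)‖ ≤ (1 / (2 * C)) * ‖x₁ - x₂‖ := by
    intro x₁ h₁ x₂ h₂
    have := hsconv.norm_image_sub_le_of_norm_hasFDerivWithin_le
      (f := fun x => H x - L₀ x) (f' := fun x => fderiv ℝ H x - L₀)
      (fun x hx => ((hdiff x).hasFDerivAt.sub (L₀.hasFDerivAt)).hasFDerivWithinAt)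
      (fun x hx => hlip x hx x₀ hx₀) h₂ h₁
    simpa using this
  -- contraction estimate
  have hcontr : ∀ x₁ ∈ s, ∀ x₂ ∈ s, ‖g x₁ - g x₂‖ ≤ (1 / 2) * ‖x₁ - x₂‖ := by
    intro x₁ h₁ x₂ h₂
    have hid : g x₁ - g x₂ = e₀.symm (L₀ (x₁ - x₂) - (H x₁ - H x₂)) := by
      simp only [hg]
      rw [← he₀]
      simp [map_sub]
      abel
    rw [hid]
    calc ‖e₀.symm (L₀ (x₁ - x₂) - (H x₁ - H x₂))‖
        ≤ ‖(e₀.symm : Y →L[ℝ] X)‖ * ‖L₀ (x₁ - x₂) - (H x₁ - H x₂)‖ :=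
          (e₀.symm : Y →L[ℝ] X).le_opNorm _
      _ ≤ C * ((1 / (2 * C)) * ‖x₁ - x₂‖) := by
          apply mul_le_mul hCe₀ ?_ (norm_nonneg _) hC.le
          have := hmvt x₁ h₁ x₂ h₂
          calc ‖L₀ (x₁ - x₂) - (H x₁ - H x₂)‖
              = ‖(H x₁ - L₀ x₁) - (H x₂ - L₀ x₂)‖ := by
                rw [← norm_neg]; congr 1; simp [map_sub]; abel
            _ ≤ (1 / (2 * C)) * ‖x₁ - x₂‖ := this
      _ = (1 / 2) * ‖x₁ - x₂‖ := by field_simp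
  -- g maps s into s
  have hgx₀ : ‖g x₀ - x₀‖ ≤ δ / 2 := by
    have : g x₀ - x₀ = -(e₀.symm (H x₀)) := by simp [hg]
    rw [this, norm_neg]
    calc ‖e₀.symm (H x₀)‖ ≤ ‖(e₀.symm : Y →L[ℝ] X)‖ * ‖H x₀‖ :=
          (e₀.symm : Y →L[ℝ] X).le_opNorm _
      _ ≤ C * (δ / (2 * C)) := mul_le_mul hCe₀ h0 (norm_nonneg _) hC.le
      _ = δ / 2 := by field_simp
  have hmaps : ∀ x ∈ s, g x ∈ s := by
    intro x hx
    rw [hs, Metric.mem_closedBall, dist_eq_norm]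
    have hx' : ‖x - x₀‖ ≤ δ := by
      rw [hs, Metric.mem_closedBall, dist_eq_norm] at hx; exact hx
    calc ‖g x - x₀‖ ≤ ‖g x - g x₀‖ + ‖g x₀ - x₀‖ := norm_sub_le_norm_sub_add_norm_sub _ _ _
      _ ≤ (1 / 2) * ‖x - x₀‖ + δ / 2 := add_le_add (hcontr x hx x₀ hx₀) hgx₀
      _ ≤ (1 / 2) * δ + δ / 2 := by nlinarith
      _ = δ := by ring
  -- set up the contraction on the subtype
  haveI : CompleteSpace s := (Metric.isClosed_closedBall (x := x₀) (ε := δ)).completeSpace_coe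
  haveI : Nonempty s := ⟨⟨x₀, hx₀⟩⟩
  set T : s → s := fun x => ⟨g x.1, hmaps x.1 x.2⟩ with hT
  have hcw : ContractingWith (1 / 2 : NNReal) T := by
    constructor
    · exact NNReal.half_lt_self one_ne_zero
    · apply LipschitzWith.of_dist_le_mul
      intro a b
      have := hcontr a.1 a.2 b.1 b.2
      simp only [hT, Subtype.dist_eq, dist_eq_norm]
      push_cast
      exact this
  set x := hcw.fixedPoint T with hx
  have hfix : T x = x := hcw.fixedPoint_isFixedPt
  refine ⟨x.1, x.2, ?_⟩
  have : (x : X) - e₀.symm (H x.1) = x.1 := congrArg Subtype.val hfix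
  have h1 : e₀.symm (H x.1) = 0 := by
    have := sub_eq_self.mp this
    exact this
  have := congrArg e₀ h1
  simpa using this
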